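/- For every integer m ≥ 1, Σ_{k=0}^{m} k · C(2m−k−1, m−k) · 2^k = m · C(2m, m), where C(a,b) denotes the binomial coefficient a choose b. -/
import Mathlib

/-- Key pointwise identity: `k·C(a,r+1) + m·C(a,r) = m·C(a,r+1)` when `a - r = m`
and `m = k + r + 1`. -/
lemma catalan_step (a r k m : ℕ) (h1 : a - r = m) (h2 : m = k + r + 1) :
    k * Nat.choose a (r + 1) + m * Nat.choose a r = m * Nat.choose a (r + 1) := by
  have hc : Nat.choose a (r + 1) * (r + 1) = Nat.choose a r * (a - r) :=
    Nat.choose_succ_right_eq a r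
  rw [h1] at hc
  calc k * Nat.choose a (r + 1) + m * Nat.choose a r
      = k * Nat.choose a (r + 1) + Nat.choose a r * m := by ring
    _ = k * Nat.choose a (r + 1) + Nat.choose a (r + 1) * (r + 1) := by rw [hc]
    _ = m * Nat.choose a (r + 1) := by rw [h2]; ring

lemma catalan_step' (a r k m : ℕ) (h1 : a - r = m) (h2 : m = k + r + 1) :
    k * Nat.choose a (r + 1) * 2 ^ k + m * Nat.choose a r * 2 ^ (k + 1) =
      m * Nat.choose (a + 1) (r + 1) * 2 ^ k := by
  rw [Nat.choose_succ_succ]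
  simp only [Nat.succ_eq_add_one]
  have h := catalan_step a r k m h1 h2
  calc k * Nat.choose a (r + 1) * 2 ^ k + m * Nat.choose a r * 2 ^ (k + 1)
      = (k * Nat.choose a (r + 1) + m * Nat.choose a r) * 2 ^ k
          + m * Nat.choose a r * 2 ^ k := by ring
    _ = m * Nat.choose a (r + 1) * 2 ^ k + m * Nat.choose a r * 2 ^ k := by rw [h]
    _ = m * (Nat.choose a r + Nat.choose a (r + 1)) * 2 ^ k := by ring

/-- For every `m ≥ 1`, `Σ_{k=0}^{m} k · C(2m−k−1, m−k) · 2^k = m · C(2m, m)`. -/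
theorem sum_catalan_identity (m : ℕ) (hm : 1 ≤ m) :
    ∑ k ∈ Finset.range (m + 1), k * Nat.choose (2 * m - k - 1) (m - k) * 2 ^ k =
      m * Nat.choose (2 * m) m := by
  set H : ℕ → ℤ := fun k =>
    if k ≤ m then ((m * Nat.choose (2 * m - k) (m - k) * 2 ^ k : ℕ) : ℤ) else 0 with hH
  have htel := Finset.sum_range_sub' H (m + 1)
  have hterm : ∀ k ∈ Finset.range (m + 1),
      ((k * Nat.choose (2 * m - k - 1) (m - k) * 2 ^ k : ℕ) : ℤ) = H k - H (k + 1) := by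
    intro k hk
    rw [Finset.mem_range] at hk
    have hkm : k ≤ m := by omega
    rcases eq_or_lt_of_le hkm with heq | hlt
    · -- k = m
      subst heq
      simp only [hH]
      rw [if_pos le_rfl, if_neg (by omega)]
      have e1 : 2 * k - k - 1 = k - 1 := by omega
      have e2 : k - k = 0 := by omega
      have e3 : 2 * k - k = k := by omega
      rw [e1, e2, e3]
      simp
    · -- k < m
      simp only [hH]
      rw [if_pos hkm, if_pos (by omega : k + 1 ≤ m)]
      have e1 : 2 * m - k - 1 = (2 * m - (k + 1) : ℕ) := by omega
      have e2 : m - k = (m - (k + 1)) + 1 := by omega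
      have e3 : 2 * m - k = (2 * m - (k + 1)) + 1 := by omega
      have key := catalan_step' (2 * m - (k + 1)) (m - (k + 1)) k m
        (by omega) (by omega)
      rw [e1, e2, e3]
      push_cast [← key]
      ring
  have hmain : ((∑ k ∈ Finset.range (m + 1),
      k * Nat.choose (2 * m - k - 1) (m - k) * 2 ^ k : ℕ) : ℤ) =
      ((m * Nat.choose (2 * m) m : ℕ) : ℤ) := by
    rw [Nat.cast_sum, Finset.sum_congr rfl hterm, htel]
    simp only [hH]
    rw [if_pos (by omega : 0 ≤ m), if_neg (by omega : ¬ m + 1 ≤ m)]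
    simp
  exact_mod_cast hmain
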